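/- Let (X,d) be a metric space, t ∈ X, ε > 0, C > 1, and d_t : X × X → ℝ a function satisfying the triangle inequality with (1/C)·e^{−ε(x,y)_t} ≤ d_t(x,y) ≤ C·e^{−ε(x,y)_t} for all x,y. Then for any chain of points x_0, …, x_n with d(x_i, x_{i+1}) = 1 and any η ≥ 0 with t ∈ η-géod(x_0, x_n), one has ∑_{i=0}^{n−1} e^{−ε·d(x_i,t)} ≥ e^{−ε(η/2+1)}/C². -/

import Mathlib

/-- Lemme 2.5: lower bound on the exponential path sum via a visual metric. -/
theorem stmt6 {X : Type*} [MetricSpace X] (t : X) (ε C : ℝ)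
    (hε : 0 < ε) (hC : 1 < C)
    (dt : X → X → ℝ)
    (htri : ∀ x y z : X, dt x z ≤ dt x y + dt y z)
    (hlow : ∀ x y : X,
      (1 / C) * Real.exp (-ε * ((dist x t + dist y t - dist x y) / 2)) ≤ dt x y)
    (hhigh : ∀ x y : X,
      dt x y ≤ C * Real.exp (-ε * ((dist x t + dist y t - dist x y) / 2)))
    (n : ℕ) (hn : 1 ≤ n) (p : ℕ → X)
    (hpath : ∀ i < n, dist (p i) (p (i + 1)) = 1)
    (η : ℝ) (hη : 0 ≤ η)
    (ht : dist (p 0) t + dist t (p n) ≤ dist (p 0) (p n) + η) :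
    Real.exp (-ε * (η / 2 + 1)) / C ^ 2 ≤
      ∑ i ∈ Finset.range n, Real.exp (-ε * dist (p i) t) := by
  have hC0 : (0:ℝ) < C := lt_trans one_pos hC
  -- chain inequality
  have hchain : ∀ m : ℕ, 1 ≤ m →
      dt (p 0) (p m) ≤ ∑ i ∈ Finset.range m, dt (p i) (p (i+1)) := by
    intro m hm
    induction m with
    | zero => omega
    | succ k ih =>
      rcases Nat.lt_or_ge k 1 with h1 | h1
      · interval_cases k
        simp
      · rw [Finset.sum_range_succ]
        have := ih h1
        have h2 := htri (p 0) (p k) (p (k+1))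
        linarith
  -- upper bound on each term
  have hterm : ∀ i < n,
      dt (p i) (p (i+1)) ≤ C * Real.exp ε * Real.exp (-ε * dist (p i) t) := by
    intro i hi
    have h1 := hhigh (p i) (p (i+1))
    have hd : dist (p i) (p (i+1)) = 1 := hpath i hi
    have h2 : dist (p i) t - 1 ≤ dist (p (i+1)) t := by
      have h := abs_dist_sub_le (p i) (p (i+1)) t
      rw [hd] at h
      have := (abs_le.1 h).2
      linarith
    have h3 : -ε * ((dist (p i) t + dist (p (i+1)) t - dist (p i) (p (i+1))) / 2)
        ≤ ε + -ε * dist (p i) t := by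
      rw [hd]; nlinarith
    calc dt (p i) (p (i+1))
        ≤ C * Real.exp (-ε * ((dist (p i) t + dist (p (i+1)) t - dist (p i) (p (i+1))) / 2)) := h1
      _ ≤ C * Real.exp (ε + -ε * dist (p i) t) :=
          mul_le_mul_of_nonneg_left (Real.exp_le_exp.2 h3) hC0.le
      _ = C * Real.exp ε * Real.exp (-ε * dist (p i) t) := by
          rw [Real.exp_add]; ring
  set S := ∑ i ∈ Finset.range n, Real.exp (-ε * dist (p i) t) with hS
  have hsum : dt (p 0) (p n) ≤ C * Real.exp ε * S := by
    calc dt (p 0) (p n) ≤ ∑ i ∈ Finset.range n, dt (p i) (p (i+1)) := hchain n hn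
      _ ≤ ∑ i ∈ Finset.range n, C * Real.exp ε * Real.exp (-ε * dist (p i) t) :=
          Finset.sum_le_sum fun i hi => hterm i (Finset.mem_range.1 hi)
      _ = C * Real.exp ε * S := by rw [hS, Finset.mul_sum]
  have hlowb : (1/C) * Real.exp (-ε * (η/2)) ≤ dt (p 0) (p n) := by
    have h1 := hlow (p 0) (p n)
    have hG : -ε * (η/2) ≤
        -ε * ((dist (p 0) t + dist (p n) t - dist (p 0) (p n)) / 2) := by
      rw [dist_comm t (p n)] at ht
      nlinarith
    calc (1/C) * Real.exp (-ε * (η/2))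
        ≤ (1/C) * Real.exp (-ε * ((dist (p 0) t + dist (p n) t - dist (p 0) (p n)) / 2)) :=
          mul_le_mul_of_nonneg_left (Real.exp_le_exp.2 hG) (by positivity)
      _ ≤ dt (p 0) (p n) := h1
  have key : (1/C) * Real.exp (-ε * (η/2)) ≤ C * Real.exp ε * S := le_trans hlowb hsum
  have hmul : Real.exp (-ε * (η / 2 + 1)) * Real.exp ε = Real.exp (-ε * (η/2)) := by
    rw [← Real.exp_add]; ring_nf
  rw [div_le_iff₀ (by positivity : (0:ℝ) < C^2)]
  have hkey2 : Real.exp (-ε * (η/2)) ≤ C^2 * Real.exp ε * S := by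
    have := mul_le_mul_of_nonneg_left key hC0.le
    have hc : C * (1 / C * Real.exp (-ε * (η/2))) = Real.exp (-ε * (η/2)) := by
      field_simp
    rw [hc] at this
    nlinarith
  rw [← hmul] at hkey2
  have hep := Real.exp_pos ε
  nlinarith
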